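/- The functions J = (q₁²+p₁²)/2 - (q₂²+p₂²) and H = (1-t)R + t(X + εR²), where R = (q₁²+p₁²)/2 + (q₂²+p₂²) and X = 2q₁p₁q₂ + (q₁²-p₁²)p₂, Poisson commute with respect to the canonical symplectic structure on ℝ⁴ (i.e., {J,H} = 0 for all real t, ε). -/

import Mathlib

/-- The momentum of the `1:(-2)` resonant circle action. -/
noncomputable def Josc (q₁ p₁ q₂ p₂ : ℝ) : ℝ :=
  (q₁ ^ 2 + p₁ ^ 2) / 2 - (q₂ ^ 2 + p₂ ^ 2)

/-- The perturbed oscillator Hamiltonian `H = (1-t)R + t(X + εR²)`. -/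
noncomputable def Hosc (t ε : ℝ) (q₁ p₁ q₂ p₂ : ℝ) : ℝ :=
  (1 - t) * ((q₁ ^ 2 + p₁ ^ 2) / 2 + (q₂ ^ 2 + p₂ ^ 2)) +
    t * ((2 * q₁ * p₁ * q₂ + (q₁ ^ 2 - p₁ ^ 2) * p₂) +
      ε * ((q₁ ^ 2 + p₁ ^ 2) / 2 + (q₂ ^ 2 + p₂ ^ 2)) ^ 2)

/-- `J` and `H = (1-t)R + t(X + εR²)` Poisson commute for the canonical
symplectic structure on `ℝ⁴`. -/
theorem oscillator_poisson_commute (t ε : ℝ) (q₁ p₁ q₂ p₂ : ℝ) :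
    deriv (fun x => Josc x p₁ q₂ p₂) q₁ * deriv (fun x => Hosc t ε q₁ x q₂ p₂) p₁
      - deriv (fun x => Josc q₁ x q₂ p₂) p₁ * deriv (fun x => Hosc t ε x p₁ q₂ p₂) q₁
      + deriv (fun x => Josc q₁ p₁ x p₂) q₂ * deriv (fun x => Hosc t ε q₁ p₁ q₂ x) p₂
      - deriv (fun x => Josc q₁ p₁ q₂ x) p₂ * deriv (fun x => Hosc t ε q₁ p₁ x p₂) q₂
      = 0 := by
  have hJ1 : HasDerivAt (fun x : ℝ => (x ^ 2 + p₁ ^ 2) / 2 - (q₂ ^ 2 + p₂ ^ 2)) (↑2 * q₁ ^ 1 / 2) q₁ :=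
    (((hasDerivAt_pow 2 q₁).add_const (p₁ ^ 2)).div_const 2).sub_const _
  have hJ2 : HasDerivAt (fun x : ℝ => (q₁ ^ 2 + x ^ 2) / 2 - (q₂ ^ 2 + p₂ ^ 2)) (↑2 * p₁ ^ 1 / 2) p₁ :=
    (((hasDerivAt_pow 2 p₁).const_add (q₁ ^ 2)).div_const 2).sub_const _
  have hJ3 : HasDerivAt (fun x : ℝ => (q₁ ^ 2 + p₁ ^ 2) / 2 - (x ^ 2 + p₂ ^ 2)) (-(↑2 * q₂ ^ 1)) q₂ :=
    (((hasDerivAt_pow 2 q₂).add_const (p₂ ^ 2)).const_sub _)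
  have hJ4 : HasDerivAt (fun x : ℝ => (q₁ ^ 2 + p₁ ^ 2) / 2 - (q₂ ^ 2 + x ^ 2)) (-(↑2 * p₂ ^ 1)) p₂ :=
    (((hasDerivAt_pow 2 p₂).const_add (q₂ ^ 2)).const_sub _)
  -- R as function of each variable
  have hR1 : HasDerivAt (fun x : ℝ => (x ^ 2 + p₁ ^ 2) / 2 + (q₂ ^ 2 + p₂ ^ 2))
      (↑2 * q₁ ^ 1 / 2) q₁ :=
    (((hasDerivAt_pow 2 q₁).add_const (p₁ ^ 2)).div_const 2).add_const _
  have hR2 : HasDerivAt (fun x : ℝ => (q₁ ^ 2 + x ^ 2) / 2 + (q₂ ^ 2 + p₂ ^ 2))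
      (↑2 * p₁ ^ 1 / 2) p₁ :=
    (((hasDerivAt_pow 2 p₁).const_add (q₁ ^ 2)).div_const 2).add_const _
  have hR3 : HasDerivAt (fun x : ℝ => (q₁ ^ 2 + p₁ ^ 2) / 2 + (x ^ 2 + p₂ ^ 2))
      (↑2 * q₂ ^ 1) q₂ :=
    ((hasDerivAt_pow 2 q₂).add_const (p₂ ^ 2)).const_add _
  have hR4 : HasDerivAt (fun x : ℝ => (q₁ ^ 2 + p₁ ^ 2) / 2 + (q₂ ^ 2 + x ^ 2))
      (↑2 * p₂ ^ 1) p₂ :=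
    ((hasDerivAt_pow 2 p₂).const_add (q₂ ^ 2)).const_add _
  -- X as function of each variable
  have hX1 : HasDerivAt (fun x : ℝ => 2 * x * p₁ * q₂ + (x ^ 2 - p₁ ^ 2) * p₂)
      (2 * 1 * p₁ * q₂ + (↑2 * q₁ ^ 1) * p₂) q₁ :=
    ((((hasDerivAt_id q₁).const_mul 2).mul_const p₁).mul_const q₂).add
      (((hasDerivAt_pow 2 q₁).sub_const (p₁ ^ 2)).mul_const p₂)
  have hX2 : HasDerivAt (fun x : ℝ => 2 * q₁ * x * q₂ + (q₁ ^ 2 - x ^ 2) * p₂)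
      ((2 * q₁ * 1) * q₂ + (-(↑2 * p₁ ^ 1)) * p₂) p₁ :=
    ((((hasDerivAt_id p₁).const_mul (2 * q₁)).mul_const q₂)).add
      (((hasDerivAt_pow 2 p₁).const_sub (q₁ ^ 2)).mul_const p₂)
  have hX3 : HasDerivAt (fun x : ℝ => 2 * q₁ * p₁ * x + (q₁ ^ 2 - p₁ ^ 2) * p₂)
      (2 * q₁ * p₁ * 1) q₂ :=
    (((hasDerivAt_id q₂).const_mul (2 * q₁ * p₁))).add_const _
  have hX4 : HasDerivAt (fun x : ℝ => 2 * q₁ * p₁ * q₂ + (q₁ ^ 2 - p₁ ^ 2) * x)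
      ((q₁ ^ 2 - p₁ ^ 2) * 1) p₂ :=
    (((hasDerivAt_id p₂).const_mul (q₁ ^ 2 - p₁ ^ 2))).const_add _
  have hH1 := ((hR1.const_mul (1 - t)).add
    ((hX1.add (((hR1.pow 2).const_mul ε))).const_mul t)).deriv
  have hH2 := ((hR2.const_mul (1 - t)).add
    ((hX2.add (((hR2.pow 2).const_mul ε))).const_mul t)).deriv
  have hH3 := ((hR3.const_mul (1 - t)).add
    ((hX3.add (((hR3.pow 2).const_mul ε))).const_mul t)).deriv
  have hH4 := ((hR4.const_mul (1 - t)).add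
    ((hX4.add (((hR4.pow 2).const_mul ε))).const_mul t)).deriv
  simp only [Hosc, Josc]
  rw [hJ1.deriv, hJ2.deriv, hJ3.deriv, hJ4.deriv]
  erw [hH1, hH2, hH3, hH4]
  ring
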